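/- arXiv:1908.00362 — 2 statements merged into one kernel-verified Lean document; each statement's English description precedes it below -/
import Mathlib

section
/- For t ∈ [0,1] and positive differentiable functions u, w on a domain, defining η_t = (t·u^p + (1-t)·w^p)^{1/p} with p > 1, the pointwise inequality |Dη_t|^p ≤ t·|Du|^p + (1-t)·|Dw|^p holds. -/
open Real

lemma eta_key_ineq (p : ℝ) (hp : 1 < p) {U W a b t : ℝ}
    (hU : 0 < U) (hW : 0 < W) (ha : 0 ≤ a) (hb : 0 ≤ b)
    (ht0 : 0 ≤ t) (ht1 : t ≤ 1) :
    ((t * U ^ p + (1 - t) * W ^ p) ^ (1 / p - 1) *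
      (t * U ^ (p - 1) * a + (1 - t) * W ^ (p - 1) * b)) ^ p
      ≤ t * a ^ p + (1 - t) * b ^ p := by
  have hp0 : (0:ℝ) < p := by linarith
  have hUp : (0:ℝ) < U ^ p := Real.rpow_pos_of_pos hU p
  have hWp : (0:ℝ) < W ^ p := Real.rpow_pos_of_pos hW p
  set S : ℝ := t * U ^ p + (1 - t) * W ^ p with hSdef
  have hS : 0 < S := by
    rcases lt_or_ge t (1/2) with h | h
    · have h1t : (0:ℝ) < 1 - t := by linarith
      have : 0 < (1 - t) * W ^ p := by positivity
      nlinarith [mul_nonneg ht0 hUp.le]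
    · have : 0 < t * U ^ p := by nlinarith
      nlinarith [mul_nonneg (by linarith : (0:ℝ) ≤ 1 - t) hWp.le]
  set lam : ℝ := t * U ^ p / S with hlam
  set mu : ℝ := (1 - t) * W ^ p / S with hmu
  have hlam0 : 0 ≤ lam := by positivity
  have hmu0 : 0 ≤ mu := by
    have : (0:ℝ) ≤ 1 - t := by linarith
    positivity
  have hsum : lam + mu = 1 := by
    rw [hlam, hmu, ← add_div]
    exact div_self hS.ne'
  have hconv := convexOn_rpow hp.le
  have hz1 : a / U ∈ Set.Ici (0:ℝ) := Set.mem_Ici.mpr (by positivity)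
  have hz2 : b / W ∈ Set.Ici (0:ℝ) := Set.mem_Ici.mpr (by positivity)
  have hjensen := hconv.2 hz1 hz2 hlam0 hmu0 hsum
  simp only [smul_eq_mul] at hjensen
  have hUp1 : U ^ (p - 1) = U ^ p / U := by
    rw [Real.rpow_sub hU, Real.rpow_one]
  have hWp1 : W ^ (p - 1) = W ^ p / W := by
    rw [Real.rpow_sub hW, Real.rpow_one]
  have hSexp : S ^ (1 / p - 1) = S ^ (1 / p) / S := by
    rw [Real.rpow_sub hS, Real.rpow_one]
  have hLHS : S ^ (1 / p - 1) * (t * U ^ (p - 1) * a + (1 - t) * W ^ (p - 1) * b)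
      = S ^ (1 / p) * (lam * (a / U) + mu * (b / W)) := by
    rw [hSexp, hUp1, hWp1, hlam, hmu]
    field_simp
  rw [hLHS]
  have hx0 : 0 ≤ lam * (a / U) + mu * (b / W) := by positivity
  rw [Real.mul_rpow (Real.rpow_nonneg hS.le _) hx0, ← Real.rpow_mul hS.le]
  have hpp : 1 / p * p = 1 := by field_simp
  rw [hpp, Real.rpow_one]
  calc S * (lam * (a / U) + mu * (b / W)) ^ p
      ≤ S * (lam * (a / U) ^ p + mu * (b / W) ^ p) :=
        mul_le_mul_of_nonneg_left hjensen hS.le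
    _ = t * a ^ p + (1 - t) * b ^ p := by
        rw [hlam, hmu, Real.div_rpow ha hU.le, Real.div_rpow hb hW.le]
        field_simp

/-- pointwise convexity inequality for η_t = (t u^p + (1-t) w^p)^{1/p}. -/
theorem eta_gradient_convexity
    {E : Type*} [NormedAddCommGroup E] [InnerProductSpace ℝ E]
    (Ω : Set E) (hΩ : IsOpen Ω) (p : ℝ) (hp : 1 < p)
    (u w : E → ℝ)
    (hu : ∀ x ∈ Ω, DifferentiableAt ℝ u x) (hw : ∀ x ∈ Ω, DifferentiableAt ℝ w x)
    (hupos : ∀ x ∈ Ω, 0 < u x) (hwpos : ∀ x ∈ Ω, 0 < w x)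
    (t : ℝ) (ht : t ∈ Set.Icc (0:ℝ) 1)
    (η : E → ℝ) (hη : ∀ x, η x = (t * u x ^ p + (1 - t) * w x ^ p) ^ (1 / p)) :
    ∀ x ∈ Ω, ‖fderiv ℝ η x‖ ^ p ≤ t * ‖fderiv ℝ u x‖ ^ p + (1 - t) * ‖fderiv ℝ w x‖ ^ p := by
  intro x hx
  obtain ⟨ht0, ht1⟩ := ht
  have hηf : η = fun y => (t * u y ^ p + (1 - t) * w y ^ p) ^ (1 / p) := funext hη
  have hp0 : (0:ℝ) < p := by linarith
  have hU : 0 < u x := hupos x hx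
  have hW : 0 < w x := hwpos x hx
  have hUp : (0:ℝ) < u x ^ p := Real.rpow_pos_of_pos hU p
  have hWp : (0:ℝ) < w x ^ p := Real.rpow_pos_of_pos hW p
  set S : ℝ := t * u x ^ p + (1 - t) * w x ^ p with hSdef
  have hS : 0 < S := by
    rcases lt_or_ge t (1/2) with h | h
    · have h1t : (0:ℝ) < 1 - t := by linarith
      have : 0 < (1 - t) * w x ^ p := by positivity
      nlinarith [mul_nonneg ht0 hUp.le]
    · have : 0 < t * u x ^ p := by nlinarith
      nlinarith [mul_nonneg (by linarith : (0:ℝ) ≤ 1 - t) hWp.le]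
  have h1 : HasFDerivAt (fun y => u y ^ p)
      ((p * u x ^ (p - 1)) • fderiv ℝ u x) x :=
    (hu x hx).hasFDerivAt.rpow_const (Or.inl hU.ne')
  have h2 : HasFDerivAt (fun y => w y ^ p)
      ((p * w x ^ (p - 1)) • fderiv ℝ w x) x :=
    (hw x hx).hasFDerivAt.rpow_const (Or.inl hW.ne')
  have h3 : HasFDerivAt (fun y => t * u y ^ p + (1 - t) * w y ^ p)
      (t • ((p * u x ^ (p - 1)) • fderiv ℝ u x)
        + (1 - t) • ((p * w x ^ (p - 1)) • fderiv ℝ w x)) x :=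
    (h1.const_mul t).add (h2.const_mul (1 - t))
  have h4 : HasFDerivAt η
      ((1 / p * S ^ (1 / p - 1)) •
        (t • ((p * u x ^ (p - 1)) • fderiv ℝ u x)
          + (1 - t) • ((p * w x ^ (p - 1)) • fderiv ℝ w x))) x := by
    rw [hηf]
    exact h3.rpow_const (Or.inl hS.ne')
  rw [h4.fderiv]
  set a := ‖fderiv ℝ u x‖ with hadef
  set b := ‖fderiv ℝ w x‖ with hbdef
  have ha : 0 ≤ a := norm_nonneg _
  have hb : 0 ≤ b := norm_nonneg _
  have hSexp : (0:ℝ) ≤ S ^ (1 / p - 1) := (Real.rpow_pos_of_pos hS _).le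
  have hUp1 : (0:ℝ) ≤ u x ^ (p - 1) := (Real.rpow_pos_of_pos hU _).le
  have hWp1 : (0:ℝ) ≤ w x ^ (p - 1) := (Real.rpow_pos_of_pos hW _).le
  have hnorm : ‖(1 / p * S ^ (1 / p - 1)) •
        (t • ((p * u x ^ (p - 1)) • fderiv ℝ u x)
          + (1 - t) • ((p * w x ^ (p - 1)) • fderiv ℝ w x))‖
      ≤ S ^ (1 / p - 1) * (t * u x ^ (p - 1) * a + (1 - t) * w x ^ (p - 1) * b) := by
    rw [norm_smul]
    have htri : ‖t • ((p * u x ^ (p - 1)) • fderiv ℝ u x)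
          + (1 - t) • ((p * w x ^ (p - 1)) • fderiv ℝ w x)‖
        ≤ t * (p * u x ^ (p - 1)) * a + (1 - t) * (p * w x ^ (p - 1)) * b := by
      refine (norm_add_le _ _).trans ?_
      rw [norm_smul, norm_smul, norm_smul, norm_smul]
      simp only [Real.norm_eq_abs]
      rw [abs_of_nonneg ht0, abs_of_nonneg (by linarith : (0:ℝ) ≤ 1 - t),
        abs_of_nonneg (by positivity : (0:ℝ) ≤ p * u x ^ (p - 1)),
        abs_of_nonneg (by positivity : (0:ℝ) ≤ p * w x ^ (p - 1))]
      rw [← hadef, ← hbdef]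
      ring_nf
      exact le_rfl
    have hc0 : (0:ℝ) ≤ 1 / p * S ^ (1 / p - 1) := by positivity
    calc ‖(1 / p * S ^ (1 / p - 1) : ℝ)‖ * _
        ≤ (1 / p * S ^ (1 / p - 1)) *
            (t * (p * u x ^ (p - 1)) * a + (1 - t) * (p * w x ^ (p - 1)) * b) := by
          rw [Real.norm_eq_abs, abs_of_nonneg hc0]
          exact mul_le_mul_of_nonneg_left htri hc0
      _ = S ^ (1 / p - 1) * (t * u x ^ (p - 1) * a + (1 - t) * w x ^ (p - 1) * b) := by
          field_simp
  calc ‖(1 / p * S ^ (1 / p - 1)) •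
        (t • ((p * u x ^ (p - 1)) • fderiv ℝ u x)
          + (1 - t) • ((p * w x ^ (p - 1)) • fderiv ℝ w x))‖ ^ p
      ≤ (S ^ (1 / p - 1) * (t * u x ^ (p - 1) * a + (1 - t) * w x ^ (p - 1) * b)) ^ p :=
        Real.rpow_le_rpow (norm_nonneg _) hnorm hp0.le
    _ ≤ t * a ^ p + (1 - t) * b ^ p :=
        eta_key_ineq p hp hU hW ha hb ht0 ht1
end

section
/- If equality |Dη_t|^p = t·|Du|^p + (1-t)·|Dw|^p holds everywhere for some t ∈ (0,1), where η_t = (t·u^p + (1-t)·w^p)^{1/p}, then Du/u = Dw/w everywhere, and hence log u - log w is locally constant; if the domain is connected, then u = c·w for some constant c > 0. -/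
open Real

lemma cs2 (a b c d : ℝ) : a*b + c*d ≤ Real.sqrt (a^2+c^2) * Real.sqrt (b^2+d^2) := by
  have h1 : (a*b+c*d)^2 ≤ (a^2+c^2)*(b^2+d^2) := by nlinarith [sq_nonneg (a*d - b*c)]
  calc a*b+c*d ≤ |a*b+c*d| := le_abs_self _
    _ = Real.sqrt ((a*b+c*d)^2) := (Real.sqrt_sq_eq_abs _).symm
    _ ≤ Real.sqrt ((a^2+c^2)*(b^2+d^2)) := Real.sqrt_le_sqrt h1
    _ = _ := Real.sqrt_mul (by positivity) _

lemma near_norming' {E : Type*} [NormedAddCommGroup E] [NormedSpace ℝ E]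
    (f : E →L[ℝ] ℝ) {ε : ℝ} (hε : 0 < ε) :
    ∃ x : E, ‖x‖ ≤ 1 ∧ ‖f‖ - ε ≤ f x := by
  by_cases h : ‖f‖ - ε < 0
  · exact ⟨0, by simp, by simpa using h.le⟩
  · obtain ⟨x, hx1, hx2⟩ := f.exists_lt_apply_of_lt_opNorm (r := ‖f‖ - ε) (by linarith [hε])
    rcases le_or_gt 0 (f x) with h0 | h0
    · refine ⟨x, hx1.le, ?_⟩
      rw [Real.norm_eq_abs, abs_of_nonneg h0] at hx2
      linarith
    · refine ⟨-x, by simpa using hx1.le, ?_⟩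
      rw [map_neg]
      rw [Real.norm_eq_abs, abs_of_neg h0] at hx2
      linarith

set_option maxHeartbeats 1000000 in
lemma dual_parallelogram {E : Type*} [NormedAddCommGroup E] [InnerProductSpace ℝ E]
    (f g : E →L[ℝ] ℝ) :
    ‖f + g‖^2 + ‖f - g‖^2 ≤ 2*‖f‖^2 + 2*‖g‖^2 := by
  set P := ‖f + g‖ with hP
  set Q := ‖f - g‖ with hQ
  have hP0 : 0 ≤ P := norm_nonneg _
  have hQ0 : 0 ≤ Q := norm_nonneg _
  have main : P^2 + Q^2 ≤ Real.sqrt (P^2+Q^2) * Real.sqrt (2*‖f‖^2 + 2*‖g‖^2) := by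
    refine le_of_forall_pos_le_add fun ε hε => ?_
    set δ := ε / (P + Q + 1) with hδdef
    have hδ : 0 < δ := by positivity
    obtain ⟨x, hx1, hx2⟩ := near_norming' (f + g) hδ
    obtain ⟨y, hy1, hy2⟩ := near_norming' (f - g) hδ
    have e1 : P*(f+g) x + Q*(f-g) y = f (P•x + Q•y) + g (P•x - Q•y) := by
      simp only [ContinuousLinearMap.add_apply, ContinuousLinearMap.sub_apply,
        map_add, map_sub, map_smul, smul_eq_mul]
      ring
    have e2 : f (P•x + Q•y) ≤ ‖f‖ * ‖P•x + Q•y‖ :=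
      le_trans (le_abs_self _) (f.le_opNorm _)
    have e3 : g (P•x - Q•y) ≤ ‖g‖ * ‖P•x - Q•y‖ :=
      le_trans (le_abs_self _) (g.le_opNorm _)
    have epar : ‖P•x + Q•y‖^2 + ‖P•x - Q•y‖^2 ≤ 2*(P^2+Q^2) := by
      have := parallelogram_law_with_norm ℝ (P•x) (Q•y)
      have hxx : ‖P•x‖ ≤ P := by
        rw [norm_smul, Real.norm_eq_abs, abs_of_nonneg hP0]
        nlinarith [hP0, hx1, norm_nonneg x]
      have hyy : ‖Q•y‖ ≤ Q := by
        rw [norm_smul, Real.norm_eq_abs, abs_of_nonneg hQ0]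
        nlinarith [hQ0, hy1, norm_nonneg y]
      nlinarith [norm_nonneg (P•x), norm_nonneg (Q•y), norm_nonneg (P•x + Q•y),
        norm_nonneg (P•x - Q•y)]
    have e4 : ‖f‖ * ‖P•x + Q•y‖ + ‖g‖ * ‖P•x - Q•y‖ ≤
        Real.sqrt (‖f‖^2 + ‖g‖^2) * Real.sqrt (‖P•x + Q•y‖^2 + ‖P•x - Q•y‖^2) :=
      cs2 _ _ _ _
    have e5 : Real.sqrt (‖P•x + Q•y‖^2 + ‖P•x - Q•y‖^2) ≤ Real.sqrt (2*(P^2+Q^2)) :=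
      Real.sqrt_le_sqrt epar
    have e6 : Real.sqrt (‖f‖^2 + ‖g‖^2) * Real.sqrt (2*(P^2+Q^2)) =
        Real.sqrt (P^2+Q^2) * Real.sqrt (2*‖f‖^2 + 2*‖g‖^2) := by
      rw [show 2*(P^2+Q^2) = 2*P^2+2*Q^2 by ring, show (2:ℝ)*P^2+2*Q^2 = 2*(P^2+Q^2) by ring,
        show (2:ℝ)*‖f‖^2+2*‖g‖^2 = 2*(‖f‖^2+‖g‖^2) by ring,
        Real.sqrt_mul (by norm_num) (P^2+Q^2), Real.sqrt_mul (by norm_num) (‖f‖^2+‖g‖^2)]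
      ring
    have e7 : P^2 + Q^2 ≤ P*(f+g) x + Q*(f-g) y + δ*(P+Q) := by
      nlinarith [mul_le_mul_of_nonneg_left hx2 hP0, mul_le_mul_of_nonneg_left hy2 hQ0]
    have e8 : δ*(P+Q) ≤ ε := by
      rw [hδdef, div_mul_eq_mul_div, div_le_iff₀ (by positivity)]
      nlinarith [hε]
    calc P^2 + Q^2 ≤ f (P•x + Q•y) + g (P•x - Q•y) + δ*(P+Q) := by rw [← e1]; exact e7
      _ ≤ Real.sqrt (‖f‖^2 + ‖g‖^2) * Real.sqrt (2*(P^2+Q^2)) + ε := by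
          have := le_trans e4 (mul_le_mul_of_nonneg_left e5 (Real.sqrt_nonneg _))
          nlinarith [e2, e3, e8]
      _ = Real.sqrt (P^2+Q^2) * Real.sqrt (2*‖f‖^2 + 2*‖g‖^2) + ε := by rw [e6]
  rcases eq_or_lt_of_le (by positivity : (0:ℝ) ≤ P^2 + Q^2) with h0 | h0
  · nlinarith [sq_nonneg ‖f‖, sq_nonneg ‖g‖]
  · have hs : Real.sqrt (P^2+Q^2) ≤ Real.sqrt (2*‖f‖^2 + 2*‖g‖^2) := by
      have hsp : 0 < Real.sqrt (P^2+Q^2) := Real.sqrt_pos.mpr h0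
      have : Real.sqrt (P^2+Q^2) * Real.sqrt (P^2+Q^2) ≤
          Real.sqrt (P^2+Q^2) * Real.sqrt (2*‖f‖^2 + 2*‖g‖^2) := by
        rw [Real.mul_self_sqrt (by positivity)]; exact main
      exact le_of_mul_le_mul_left this hsp
    calc P^2 + Q^2 = Real.sqrt (P^2+Q^2) * Real.sqrt (P^2+Q^2) :=
          (Real.mul_self_sqrt (by positivity)).symm
      _ ≤ Real.sqrt (2*‖f‖^2 + 2*‖g‖^2) * Real.sqrt (2*‖f‖^2 + 2*‖g‖^2) :=
          mul_self_le_mul_self (Real.sqrt_nonneg _) hs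
      _ = 2*‖f‖^2 + 2*‖g‖^2 := Real.mul_self_sqrt (by positivity)

lemma norm_add_eq_of_aux {E : Type*} [NormedAddCommGroup E] [InnerProductSpace ℝ E]
    (f g : E →L[ℝ] ℝ) {c d : ℝ} (hc : 0 < c) (hcd : c ≤ d)
    (hr : ‖f‖ = ‖g‖) (h : ‖c•f + d•g‖ = c*‖f‖ + d*‖g‖) : 2*‖f‖ ≤ ‖f + g‖ := by
  have key : ‖c•f + d•g‖ ≤ c*‖f+g‖ + (d-c)*‖g‖ := by
    have : c•f + d•g = c•(f+g) + (d-c)•g := by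
      module
    rw [this]
    calc ‖c•(f+g) + (d-c)•g‖ ≤ ‖c•(f+g)‖ + ‖(d-c)•g‖ := norm_add_le _ _
      _ = c*‖f+g‖ + (d-c)*‖g‖ := by
          rw [norm_smul c (f+g), norm_smul (d-c) g]
          rw [Real.norm_eq_abs, Real.norm_eq_abs, abs_of_nonneg hc.le,
            abs_of_nonneg (show (0:ℝ) ≤ d - c by linarith)]
  rw [h, hr] at key
  have : 2*c*‖g‖ ≤ c*‖f+g‖ := by linarith
  rw [hr]
  nlinarith [hc]

lemma eq_of_triangle_eq {E : Type*} [NormedAddCommGroup E] [InnerProductSpace ℝ E]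
    (f g : E →L[ℝ] ℝ) {c d : ℝ} (hc : 0 < c) (hd : 0 < d)
    (hr : ‖f‖ = ‖g‖) (h : ‖c•f + d•g‖ = c*‖f‖ + d*‖g‖) : f = g := by
  have h2 : 2*‖f‖ ≤ ‖f + g‖ := by
    rcases le_total c d with hcd | hcd
    · exact norm_add_eq_of_aux f g hc hcd hr h
    · have h' : ‖d•g + c•f‖ = d*‖g‖ + c*‖f‖ := by rwa [add_comm (d•g), add_comm (d*‖g‖)]
      rw [hr, add_comm f g]
      exact norm_add_eq_of_aux g f hd hcd hr.symm h'
  have h3 : ‖f + g‖ ≤ ‖f‖ + ‖g‖ := norm_add_le _ _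
  have h4 : ‖f + g‖ = 2*‖f‖ := by rw [hr] at h3 ⊢; linarith
  have h5 := dual_parallelogram f g
  have h6 : ‖f - g‖^2 ≤ 0 := by
    rw [h4, hr] at h5; nlinarith
  have : ‖f - g‖ = 0 := by nlinarith [norm_nonneg (f-g), sq_nonneg ‖f-g‖]
  exact sub_eq_zero.mp (norm_eq_zero.mp this)

set_option maxHeartbeats 1000000 in
lemma key_point {E : Type*} [NormedAddCommGroup E] [InnerProductSpace ℝ E]
    {p t a b : ℝ} (hp : 1 < p) (ht0 : 0 < t) (ht1 : t < 1) (ha : 0 < a) (hb : 0 < b)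
    (A B : E →L[ℝ] ℝ)
    (heq : ((t*a^p + (1-t)*b^p) ^ (1/p - 1) *
        ‖(t * a^(p-1)) • A + ((1-t) * b^(p-1)) • B‖) ^ p
        = t * ‖A‖^p + (1-t)*‖B‖^p) :
    a⁻¹ • A = b⁻¹ • B := by
  have hp0 : (0:ℝ) < p := by linarith
  have hap : a ^ (p-1) = a ^ p / a := by rw [Real.rpow_sub ha, Real.rpow_one]
  have hbp : b ^ (p-1) = b ^ p / b := by rw [Real.rpow_sub hb, Real.rpow_one]
  have hapos : (0:ℝ) < a ^ p := Real.rpow_pos_of_pos ha p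
  have hbpos : (0:ℝ) < b ^ p := Real.rpow_pos_of_pos hb p
  have hap1pos : (0:ℝ) < a ^ (p-1) := Real.rpow_pos_of_pos ha _
  have hbp1pos : (0:ℝ) < b ^ (p-1) := Real.rpow_pos_of_pos hb _
  set F : ℝ := t*a^p + (1-t)*b^p with hFdef
  have h1t : (0:ℝ) < 1 - t := by linarith
  have hta : 0 < t * a^p := mul_pos ht0 hapos
  have htb : 0 < (1-t) * b^p := mul_pos h1t hbpos
  have hF : 0 < F := by rw [hFdef]; linarith
  set S : E →L[ℝ] ℝ := (t * a^(p-1)) • A + ((1-t) * b^(p-1)) • B with hSdef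
  set X : ℝ := ‖A‖ / a with hXdef
  set Y : ℝ := ‖B‖ / b with hYdef
  have hX0 : 0 ≤ X := by positivity
  have hY0 : 0 ≤ Y := by positivity
  have hnA : ‖A‖ = a * X := by rw [hXdef]; field_simp
  have hnB : ‖B‖ = b * Y := by rw [hYdef]; field_simp
  set lam : ℝ := t*a^p/F with hlamdef
  have hl0 : 0 < lam := by positivity
  have hl1 : lam < 1 := by
    rw [hlamdef, div_lt_one hF, hFdef]; linarith
  set M : ℝ := t*a^(p-1)*‖A‖ + (1-t)*b^(p-1)*‖B‖ with hMdef
  have hSM : ‖S‖ ≤ M := by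
    rw [hSdef, hMdef]
    calc ‖(t * a^(p-1)) • A + ((1-t) * b^(p-1)) • B‖
        ≤ ‖(t * a^(p-1)) • A‖ + ‖((1-t) * b^(p-1)) • B‖ := norm_add_le _ _
      _ = t*a^(p-1)*‖A‖ + (1-t)*b^(p-1)*‖B‖ := by
          rw [norm_smul (t * a^(p-1)) A, norm_smul ((1-t) * b^(p-1)) B,
            Real.norm_eq_abs, Real.norm_eq_abs, abs_of_nonneg (mul_nonneg ht0.le hap1pos.le),
            abs_of_nonneg (mul_nonneg h1t.le hbp1pos.le)]
  set z : ℝ := lam*X + (1-lam)*Y with hzdef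
  have hz0 : 0 ≤ z := by
    have h1 := mul_nonneg hl0.le hX0
    have h2 := mul_nonneg (by linarith : (0:ℝ) ≤ 1 - lam) hY0
    rw [hzdef]; linarith
  have hM0 : 0 ≤ M := by
    have h1 := mul_nonneg (mul_nonneg ht0.le hap1pos.le) (norm_nonneg A)
    have h2 := mul_nonneg (mul_nonneg (by linarith : (0:ℝ) ≤ 1-t) hbp1pos.le) (norm_nonneg B)
    rw [hMdef]; linarith
  have hMz : M = F * z := by
    rw [hMdef, hzdef, hnA, hnB, hap, hbp, hlamdef]
    field_simp
    ring
  have hRHS : t * ‖A‖^p + (1-t)*‖B‖^p = F * (lam*X^p + (1-lam)*Y^p) := by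
    rw [hnA, hnB, Real.mul_rpow ha.le hX0, Real.mul_rpow hb.le hY0, hlamdef]
    have h1lam : 1 - t*a^p/F = (1-t)*b^p/F := by field_simp; ring
    rw [h1lam]
    field_simp
  have hLHS : (F ^ (1/p - 1) * ‖S‖) ^ p = F ^ (1-p) * ‖S‖^p := by
    rw [Real.mul_rpow (Real.rpow_nonneg hF.le _) (norm_nonneg _), ← Real.rpow_mul hF.le]
    congr 2
    field_simp
  have hFp : F ^ (1-p) * F ^ p = F := by
    rw [← Real.rpow_add hF]; norm_num
  have hF1p : 0 < F ^ (1-p) := Real.rpow_pos_of_pos hF _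
  have hconv : z ^ p ≤ lam*X^p + (1-lam)*Y^p := by
    have := (convexOn_rpow (by linarith : (1:ℝ) ≤ p)).2 (Set.mem_Ici.mpr hX0) (Set.mem_Ici.mpr hY0)
      hl0.le (by linarith : (0:ℝ) ≤ 1 - lam) (by ring)
    simpa [smul_eq_mul, hzdef] using this
  have hMp : M ^ p = F ^ p * z ^ p := by
    rw [hMz, Real.mul_rpow hF.le hz0]
  have hSp : ‖S‖ ^ p ≤ M ^ p := Real.rpow_le_rpow (norm_nonneg _) hSM hp0.le
  -- the chain of inequalities, all forced to be equalities
  have hchain1 : F ^ (1-p) * ‖S‖^p ≤ F * z^p := by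
    calc F ^ (1-p) * ‖S‖^p ≤ F ^ (1-p) * M^p :=
          mul_le_mul_of_nonneg_left hSp hF1p.le
      _ = F * z^p := by rw [hMp, ← mul_assoc, hFp]
  have hchain2 : F * z^p ≤ F * (lam*X^p + (1-lam)*Y^p) :=
    mul_le_mul_of_nonneg_left hconv hF.le
  have heq' : F ^ (1-p) * ‖S‖^p = F * (lam*X^p + (1-lam)*Y^p) := by
    rw [← hLHS, ← hRHS]; exact heq
  have heqz : z ^ p = lam*X^p + (1-lam)*Y^p := by
    have h1 : F * z^p = F * (lam*X^p + (1-lam)*Y^p) := le_antisymm hchain2 (heq' ▸ hchain1)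
    exact mul_left_cancel₀ hF.ne' h1
  have hXY : X = Y := by
    by_contra hne
    have := (strictConvexOn_rpow hp).2 (Set.mem_Ici.mpr hX0) (Set.mem_Ici.mpr hY0)
      hne hl0 (by linarith : (0:ℝ) < 1 - lam) (by ring)
    simp only [smul_eq_mul] at this
    rw [← hzdef] at this
    linarith [heqz]
  have hSpeq : ‖S‖^p = M^p := by
    have h1 : F ^ (1-p) * ‖S‖^p = F ^ (1-p) * M^p := by
      rw [hMp, ← mul_assoc, hFp, heq', heqz]
    exact mul_left_cancel₀ hF1p.ne' h1
  have hSMeq : ‖S‖ = M := by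
    refine le_antisymm hSM (le_of_not_gt fun hlt => ?_)
    have : ‖S‖ ^ p < M ^ p := Real.rpow_lt_rpow (norm_nonneg _) hlt hp0
    linarith [hSpeq]
  -- case X = 0
  rcases eq_or_lt_of_le hX0 with hX | hX
  · have hA : A = 0 := by
      have : ‖A‖ = 0 := by rw [hnA, ← hX]; ring
      exact norm_eq_zero.mp this
    have hB : B = 0 := by
      have : ‖B‖ = 0 := by rw [hnB, ← hXY, ← hX]; ring
      exact norm_eq_zero.mp this
    rw [hA, hB, smul_zero, smul_zero]
  · -- main case
    have hfA : ‖a⁻¹ • A‖ = X := by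
      rw [norm_smul a⁻¹ A, Real.norm_eq_abs, abs_of_nonneg (by positivity), hnA]
      field_simp
    have hgB : ‖b⁻¹ • B‖ = Y := by
      rw [norm_smul b⁻¹ B, Real.norm_eq_abs, abs_of_nonneg (by positivity), hnB]
      field_simp
    have hcf : (t*a^p) • (a⁻¹ • A) = (t * a^(p-1)) • A := by
      rw [smul_smul]
      congr 1
      rw [hap]; field_simp
    have hdg : ((1-t)*b^p) • (b⁻¹ • B) = ((1-t) * b^(p-1)) • B := by
      rw [smul_smul]
      congr 1
      rw [hbp]; field_simp
    have htri : ‖(t*a^p) • (a⁻¹ • A) + ((1-t)*b^p) • (b⁻¹ • B)‖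
        = (t*a^p) * ‖a⁻¹ • A‖ + ((1-t)*b^p) * ‖b⁻¹ • B‖ := by
      rw [hcf, hdg, ← hSdef, hSMeq, hMdef, hfA, hgB, hnA, hnB, hap, hbp, ← hXY]
      field_simp
    exact eq_of_triangle_eq _ _ hta htb
      (by rw [hfA, hgB, hXY]) htri

set_option maxHeartbeats 1000000 in
/-- equality in the convexity inequality forces proportionality. -/
theorem eta_gradient_equality_case
    {E : Type*} [NormedAddCommGroup E] [InnerProductSpace ℝ E]
    (Ω : Set E) (hΩ : IsOpen Ω) (hconn : IsConnected Ω) (p : ℝ) (hp : 1 < p)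
    (u w : E → ℝ)
    (hu : ContDiffOn ℝ 1 u Ω) (hw : ContDiffOn ℝ 1 w Ω)
    (hupos : ∀ x ∈ Ω, 0 < u x) (hwpos : ∀ x ∈ Ω, 0 < w x)
    (t : ℝ) (ht : t ∈ Set.Ioo (0:ℝ) 1)
    (η : E → ℝ) (hη : ∀ x, η x = (t * u x ^ p + (1 - t) * w x ^ p) ^ (1 / p))
    (heq : ∀ x ∈ Ω,
      ‖fderiv ℝ η x‖ ^ p = t * ‖fderiv ℝ u x‖ ^ p + (1 - t) * ‖fderiv ℝ w x‖ ^ p) :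
    (∀ x ∈ Ω, (u x)⁻¹ • fderiv ℝ u x = (w x)⁻¹ • fderiv ℝ w x) ∧
      ∃ c : ℝ, 0 < c ∧ ∀ x ∈ Ω, u x = c * w x := by
  obtain ⟨ht0, ht1⟩ := ht
  have hp0 : (0:ℝ) < p := by linarith
  -- differentiability at points of Ω
  have hud : ∀ x ∈ Ω, HasFDerivAt u (fderiv ℝ u x) x := fun x hx =>
    (((hu.differentiableOn one_ne_zero) x hx).differentiableAt (hΩ.mem_nhds hx)).hasFDerivAt
  have hwd : ∀ x ∈ Ω, HasFDerivAt w (fderiv ℝ w x) x := fun x hx =>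
    (((hw.differentiableOn one_ne_zero) x hx).differentiableAt (hΩ.mem_nhds hx)).hasFDerivAt
  have hgrad : ∀ x ∈ Ω, (u x)⁻¹ • fderiv ℝ u x = (w x)⁻¹ • fderiv ℝ w x := by
    intro x hx
    have ha := hupos x hx
    have hb := hwpos x hx
    have hA := hud x hx
    have hB := hwd x hx
    set A := fderiv ℝ u x
    set B := fderiv ℝ w x
    have hFx : 0 < t * u x ^ p + (1-t) * w x ^ p := by
      have h1 := mul_pos ht0 (Real.rpow_pos_of_pos ha p)
      have h2 := mul_pos (show (0:ℝ) < 1 - t by linarith) (Real.rpow_pos_of_pos hb p)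
      linarith
    have hup : HasFDerivAt (fun y => u y ^ p) ((p * u x ^ (p-1)) • A) x :=
      hA.rpow_const (Or.inl ha.ne')
    have hwp : HasFDerivAt (fun y => w y ^ p) ((p * w x ^ (p-1)) • B) x :=
      hB.rpow_const (Or.inl hb.ne')
    have hFder : HasFDerivAt (fun y => t * u y ^ p + (1-t) * w y ^ p)
        (t • ((p * u x ^ (p-1)) • A) + (1-t) • ((p * w x ^ (p-1)) • B)) x :=
      (hup.const_mul t).add (hwp.const_mul (1-t))
    have hηd : HasFDerivAt η
        (((1/p) * (t * u x ^ p + (1-t) * w x ^ p) ^ (1/p - 1)) •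
          (t • ((p * u x ^ (p-1)) • A) + (1-t) • ((p * w x ^ (p-1)) • B))) x := by
      have hηe : η = fun y => (t * u y ^ p + (1-t) * w y ^ p) ^ (1/p) := funext hη
      rw [hηe]
      exact hFder.rpow_const (Or.inl hFx.ne')
    have hDη : fderiv ℝ η x = ((t * u x ^ p + (1-t) * w x ^ p) ^ (1/p - 1)) •
        ((t * u x ^ (p-1)) • A + ((1-t) * w x ^ (p-1)) • B) := by
      rw [hηd.fderiv]
      ext y
      simp only [ContinuousLinearMap.coe_smul', Pi.smul_apply,
        ContinuousLinearMap.add_apply, ContinuousLinearMap.coe_add',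
        ContinuousLinearMap.smul_apply, smul_eq_mul]
      field_simp
    have hnorm : ‖fderiv ℝ η x‖ =
        (t * u x ^ p + (1-t) * w x ^ p) ^ (1/p - 1) *
          ‖(t * u x ^ (p-1)) • A + ((1-t) * w x ^ (p-1)) • B‖ := by
      rw [hDη, norm_smul ((t * u x ^ p + (1-t) * w x ^ p) ^ (1/p - 1)), Real.norm_eq_abs,
        abs_of_nonneg (Real.rpow_nonneg hFx.le _)]
    refine key_point hp ht0 ht1 ha hb A B ?_
    rw [← hnorm]
    exact heq x hx
  refine ⟨hgrad, ?_⟩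
  -- the ratio u/w has zero derivative on Ω
  have hratio : ∀ x ∈ Ω, HasFDerivAt (fun y => u y * (w y)⁻¹) (0 : E →L[ℝ] ℝ) x := by
    intro x hx
    have ha := hupos x hx
    have hb := hwpos x hx
    have hA := hud x hx
    have hB := hwd x hx
    set A := fderiv ℝ u x
    set B := fderiv ℝ w x
    have hinv : HasFDerivAt (fun y => (w y)⁻¹) ((-((w x) ^ 2)⁻¹) • B) x :=
      (hasDerivAt_inv hb.ne').comp_hasFDerivAt x hB
    have hmul : HasFDerivAt (fun y => u y * (w y)⁻¹)
        (u x • ((-((w x) ^ 2)⁻¹) • B) + (w x)⁻¹ • A) x := hA.mul hinv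
    have hAeq : A = (u x * (w x)⁻¹) • B := by
      have h := congrArg (fun f => (u x) • f) (hgrad x hx)
      simp only [smul_smul] at h
      rw [mul_inv_cancel₀ ha.ne', one_smul] at h
      exact h
    have hzero : u x • ((-((w x) ^ 2)⁻¹) • B) + (w x)⁻¹ • A = 0 := by
      rw [hAeq, smul_smul, smul_smul, ← add_smul]
      have : u x * -((w x) ^ 2)⁻¹ + (w x)⁻¹ * (u x * (w x)⁻¹) = 0 := by
        field_simp
        ring
      rw [this, zero_smul]
    rwa [hzero] at hmul
  -- local constancy of the ratio
  have hloc : ∀ x ∈ Ω, ∃ ε > 0, Metric.ball x ε ⊆ Ω ∧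
      ∀ y ∈ Metric.ball x ε, u y * (w y)⁻¹ = u x * (w x)⁻¹ := by
    intro x hx
    obtain ⟨ε, hε, hball⟩ := Metric.isOpen_iff.mp hΩ x hx
    refine ⟨ε, hε, hball, fun y hy => ?_⟩
    exact (convex_ball x ε).is_const_of_fderivWithin_eq_zero
      (fun z hz => (hratio z (hball hz)).differentiableAt.differentiableWithinAt)
      (fun z hz => by
        rw [fderivWithin_of_isOpen Metric.isOpen_ball hz, (hratio z (hball hz)).fderiv])
      hy (Metric.mem_ball_self hε)
  -- globalize by connectedness
  obtain ⟨x₀, hx₀⟩ := hconn.nonempty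
  set c : ℝ := u x₀ * (w x₀)⁻¹ with hc
  have hcpos : 0 < c := mul_pos (hupos x₀ hx₀) (inv_pos.mpr (hwpos x₀ hx₀))
  have hconst : ∀ x ∈ Ω, u x * (w x)⁻¹ = c := by
    by_contra hcon
    push_neg at hcon
    obtain ⟨x₁, hx₁, hx₁ne⟩ := hcon
    set V₁ : Set E := {y | y ∈ Ω ∧ u y * (w y)⁻¹ = c} with hV₁
    set V₂ : Set E := {y | y ∈ Ω ∧ u y * (w y)⁻¹ ≠ c} with hV₂
    have hV₁open : IsOpen V₁ := by
      rw [Metric.isOpen_iff]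
      intro y hy
      obtain ⟨ε, hε, hball, hcst⟩ := hloc y hy.1
      exact ⟨ε, hε, fun z hz => ⟨hball hz, by rw [hcst z hz, hy.2]⟩⟩
    have hV₂open : IsOpen V₂ := by
      rw [Metric.isOpen_iff]
      intro y hy
      obtain ⟨ε, hε, hball, hcst⟩ := hloc y hy.1
      exact ⟨ε, hε, fun z hz => ⟨hball hz, by rw [hcst z hz]; exact hy.2⟩⟩
    have hcover : Ω ⊆ V₁ ∪ V₂ := by
      intro y hy
      by_cases h : u y * (w y)⁻¹ = c
      · exact Or.inl ⟨hy, h⟩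
      · exact Or.inr ⟨hy, h⟩
    have hne₁ : (Ω ∩ V₁).Nonempty := ⟨x₀, hx₀, hx₀, rfl⟩
    have hne₂ : (Ω ∩ V₂).Nonempty := ⟨x₁, hx₁, hx₁, hx₁ne⟩
    obtain ⟨y, _, hy₁, hy₂⟩ := hconn.isPreconnected V₁ V₂ hV₁open hV₂open hcover hne₁ hne₂
    exact hy₂.2 hy₁.2
  refine ⟨c, hcpos, fun x hx => ?_⟩
  have h := hconst x hx
  have hbx := (hwpos x hx).ne'
  field_simp at h
  linarith [h]
end
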